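/- Let V be a 2N-dimensional real inner product space with a compatible complex structure I (an isometry with I² = −Id), and let h be a positive semidefinite symmetric bilinear form on V such that h(u,u) = h(v,v) whenever u, v lie in a common I-complex line Λ and have equal norm (i.e., h restricted to each complex line is invariant under the circle action e^{iθ}). Then h is Hermitian: h(I u, I v) = h(u, v) for all u, v ∈ V. -/
import Mathlib

open Real
open scoped RealInnerProductSpace

/-- **Circle-invariance forces Hermitian symmetry.**  Let `V` be a `2N`-dimensional real inner
product space with a compatible complex structure `J` (an isometry with `J² = -1`), and let
`h` be a positive semidefinite symmetric bilinear form whose quadratic form takes equal values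
on vectors of equal norm lying in a common `J`-complex line (a `2`-dimensional `J`-invariant
real subspace).  Then `h` is Hermitian: `h (J u) (J v) = h u v`. -/
theorem circle_invariant_form_is_hermitian {V : Type*}
    [NormedAddCommGroup V] [InnerProductSpace ℝ V] [FiniteDimensional ℝ V]
    (N : ℕ) (hdim : Module.finrank ℝ V = 2 * N)
    (J : V →ₗ[ℝ] V) (hJiso : ∀ v, ‖J v‖ = ‖v‖) (hJ2 : ∀ v, J (J v) = -v)
    (h : V →ₗ[ℝ] V →ₗ[ℝ] ℝ)
    (hsymm : ∀ u v, h u v = h v u)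
    (hpos : ∀ u, 0 ≤ h u u)
    (hinv : ∀ u v : V,
      (∃ W : Submodule ℝ V, Module.finrank ℝ W = 2 ∧ (∀ w ∈ W, J w ∈ W) ∧ u ∈ W ∧ v ∈ W) →
      ‖u‖ = ‖v‖ → h u u = h v v) :
    ∀ u v, h (J u) (J v) = h u v := by
  -- J preserves inner products
  have Jinner : ∀ u v : V, ⟪J u, J v⟫ = ⟪u, v⟫ := by
    intro u v
    have := (⟨J, hJiso⟩ : V →ₗᵢ[ℝ] V).inner_map_map u v
    exact this
  -- w and J w are orthogonal
  have orth : ∀ w : V, ⟪w, J w⟫ = 0 := by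
    intro w
    have h1 : ⟪J w, J (J w)⟫ = ⟪w, J w⟫ := Jinner w (J w)
    rw [hJ2, inner_neg_right, real_inner_comm] at h1
    linarith
  -- key diagonal invariance
  have key : ∀ w : V, h (J w) (J w) = h w w := by
    intro w
    by_cases hw : w = 0
    · simp [hw]
    · apply hinv
      · refine ⟨Submodule.span ℝ (Set.range ![w, J w]), ?_, ?_, ?_, ?_⟩
        · have hli : LinearIndependent ℝ ![w, J w] := by
            rw [LinearIndependent.pair_iff]
            intro s t hst
            have h1 : ⟪w, s • w + t • J w⟫ = 0 := by rw [hst, inner_zero_right]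
            have h2 : ⟪J w, s • w + t • J w⟫ = 0 := by rw [hst, inner_zero_right]
            rw [inner_add_right, real_inner_smul_right, real_inner_smul_right, orth w,
              real_inner_self_eq_norm_sq] at h1
            have horth : ⟪J w, w⟫ = 0 := by rw [real_inner_comm]; exact orth w
            rw [inner_add_right, real_inner_smul_right, real_inner_smul_right, horth,
              real_inner_self_eq_norm_sq, hJiso] at h2
            have hwn : (0:ℝ) < ‖w‖ ^ 2 := by
              have := norm_pos_iff.mpr hw
              positivity
            constructor
            · nlinarith
            · nlinarith
          rw [finrank_span_eq_card hli]
          simp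
        · intro x hx
          induction hx using Submodule.span_induction with
          | mem x hx =>
            obtain ⟨i, rfl⟩ := hx
            fin_cases i
            · apply Submodule.subset_span
              exact ⟨1, rfl⟩
            · show J (J w) ∈ Submodule.span ℝ (Set.range ![w, J w])
              rw [hJ2]
              apply Submodule.neg_mem
              apply Submodule.subset_span
              exact ⟨0, rfl⟩
          | zero => simp
          | add x y _ _ hx hy => rw [map_add]; exact Submodule.add_mem _ hx hy
          | smul a x _ hx => rw [map_smul]; exact Submodule.smul_mem _ a hx
        · exact Submodule.subset_span ⟨1, rfl⟩
        · exact Submodule.subset_span ⟨0, rfl⟩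
      · exact hJiso w
  intro u v
  have h1 := key (u + v)
  have h2 := key u
  have h3 := key v
  simp only [map_add, LinearMap.add_apply] at h1
  have hs1 := hsymm (J u) (J v)
  have hs2 := hsymm u v
  linarith
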